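/- For any κ ≥ 1 and any E ≥ 0, the function x ↦ g(κ·g⁻¹(x) + (κ−1)·(E+1)) is increasing and convex on [0,∞). -/

import Mathlib

open Real Set Filter

noncomputable def g (E : ℝ) : ℝ := (E + 1) * Real.log (E + 1) - E * Real.log E

noncomputable def ginv : ℝ → ℝ := Function.invFunOn g (Set.Ici 0)

lemma g_zero : g 0 = 0 := by simp [g]

lemma g_continuous : Continuous g :=
  (Real.continuous_mul_log.comp (continuous_id.add continuous_const)).sub
    Real.continuous_mul_log

/-- shorthand for g' -/
noncomputable def L (t : ℝ) : ℝ := Real.log (t + 1) - Real.log t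

lemma L_pos {t : ℝ} (ht : 0 < t) : 0 < L t :=
  sub_pos.2 (Real.log_lt_log ht (by linarith))

lemma hasDerivAt_g {t : ℝ} (ht : 0 < t) : HasDerivAt g (L t) t := by
  have h1 : HasDerivAt (fun x : ℝ => x * Real.log x) (Real.log (t + 1) + 1) (t + 1) :=
    Real.hasDerivAt_mul_log (by linarith)
  have h2 : HasDerivAt (fun x : ℝ => x + 1) 1 t := (hasDerivAt_id t).add_const 1
  have h3 : HasDerivAt (fun x : ℝ => (x + 1) * Real.log (x + 1))
      ((Real.log (t + 1) + 1) * 1) t := by have := h1.comp t h2; exact this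
  have h4 : HasDerivAt (fun x : ℝ => x * Real.log x) (Real.log t + 1) t :=
    Real.hasDerivAt_mul_log ht.ne'
  have := h3.sub h4
  rw [show L t = (Real.log (t + 1) + 1) * 1 - (Real.log t + 1) by unfold L; ring]
  exact this

lemma g_strictMono : StrictMonoOn g (Set.Ici 0) := by
  apply strictMonoOn_of_deriv_pos (convex_Ici 0) g_continuous.continuousOn
  intro x hx
  rw [interior_Ici] at hx
  rw [(hasDerivAt_g hx).deriv]
  exact L_pos hx
lemma g_surj {x : ℝ} (hx : 0 ≤ x) : ∃ t ∈ Set.Ici (0:ℝ), g t = x := by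
  set b : ℝ := Real.exp x - 1 with hb
  have hb0 : 0 ≤ b := by
    have := Real.one_le_exp hx
    simp [hb]; linarith
  have hlog : Real.log (b + 1) = x := by
    rw [hb]; simp [Real.log_exp]
  have hgb : x ≤ g b := by
    have h1 : Real.log b ≤ Real.log (b + 1) := by
      rcases eq_or_lt_of_le hb0 with h | h
      · simp [← h]
      · exact (Real.log_lt_log h (by linarith)).le
    have : 0 ≤ b * (Real.log (b + 1) - Real.log b) := by
      apply mul_nonneg hb0; linarith
    have : g b = Real.log (b + 1) + b * (Real.log (b + 1) - Real.log b) := by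
      unfold g; ring
    have h2 : Real.log b ≤ x := hlog ▸ h1
    rw [this, hlog]
    nlinarith [mul_nonneg hb0 (sub_nonneg.2 h2)]
  have := intermediate_value_Icc hb0 (g_continuous.continuousOn (s := Set.Icc 0 b))
  have hxmem : x ∈ Set.Icc (g 0) (g b) := by
    rw [g_zero]; exact ⟨hx, hgb⟩
  obtain ⟨t, ht, hgt⟩ := this hxmem
  exact ⟨t, ht.1, hgt⟩

lemma g_ginv {x : ℝ} (hx : 0 ≤ x) : g (ginv x) = x :=
  Function.invFunOn_eq (g_surj hx)

lemma ginv_mem {x : ℝ} (hx : 0 ≤ x) : ginv x ∈ Set.Ici (0:ℝ) :=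
  Function.invFunOn_mem (g_surj hx)

lemma ginv_nonneg {x : ℝ} (hx : 0 ≤ x) : 0 ≤ ginv x := ginv_mem hx

lemma ginv_g {t : ℝ} (ht : 0 ≤ t) : ginv (g t) = t := by
  have hgt : 0 ≤ g t := by
    have := g_strictMono.monotoneOn (Set.self_mem_Ici) ht ht
    rwa [g_zero] at this
  exact g_strictMono.injOn (ginv_mem hgt) ht (g_ginv hgt)

lemma ginv_strictMono : StrictMonoOn ginv (Set.Ici 0) := by
  intro x hx y hy hxy
  by_contra h
  push_neg at h
  have := g_strictMono.monotoneOn (ginv_mem hy) (ginv_mem hx) h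
  rw [g_ginv hx, g_ginv hy] at this
  linarith

lemma ginv_zero : ginv 0 = 0 := by
  have := ginv_g (le_refl (0:ℝ)); rwa [g_zero] at this

lemma ginv_pos {x : ℝ} (hx : 0 < x) : 0 < ginv x := by
  have := ginv_strictMono Set.self_mem_Ici (le_of_lt hx : (0:ℝ) ≤ x) hx
  rwa [ginv_zero] at this

lemma ginv_image : Set.Ici (0:ℝ) ⊆ ginv '' Set.Ici 0 := by
  intro t ht
  have hgt : 0 ≤ g t := by
    have := g_strictMono.monotoneOn Set.self_mem_Ici ht ht
    rwa [g_zero] at this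
  exact ⟨g t, hgt, ginv_g ht⟩

lemma ginv_continuousAt {x : ℝ} (hx : 0 < x) : ContinuousAt ginv x := by
  apply ginv_strictMono.continuousAt_of_image_mem_nhds (Ici_mem_nhds hx)
  exact Filter.mem_of_superset (Ici_mem_nhds (ginv_pos hx)) ginv_image

lemma ginv_continuousOn : ContinuousOn ginv (Set.Ici 0) := by
  intro x hx
  rcases eq_or_lt_of_le (Set.mem_Ici.mp hx) with h | h
  · rw [← h]
    have : ContinuousWithinAt ginv (Set.Ici (0:ℝ)) 0 := by
      apply ginv_strictMono.continuousWithinAt_right_of_image_mem_nhdsWithin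
        self_mem_nhdsWithin
      rw [ginv_zero]
      exact Filter.mem_of_superset self_mem_nhdsWithin ginv_image
    exact this
  · exact (ginv_continuousAt h).continuousWithinAt
lemma L_ge_inv {t : ℝ} (ht : 0 < t) : 1 / (t + 1) ≤ L t := by
  have h1 : Real.log (t / (t + 1)) ≤ t / (t + 1) - 1 :=
    Real.log_le_sub_one_of_pos (by positivity)
  rw [Real.log_div ht.ne' (by linarith)] at h1
  have ht1 : (0:ℝ) < t + 1 := by linarith
  have : t / (t + 1) - 1 = -(1 / (t + 1)) := by field_simp; ring
  rw [this] at h1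
  unfold L; linarith

lemma hasDerivAt_L {t : ℝ} (ht : 0 < t) : HasDerivAt L (1 / (t + 1) - 1 / t) t := by
  have h1 : HasDerivAt (fun x : ℝ => Real.log (x + 1)) (1 / (t + 1)) t := by
    have := (Real.hasDerivAt_log (by linarith : t + 1 ≠ 0)).comp t
      ((hasDerivAt_id t).add_const 1)
    simpa [one_div, Function.comp_def] using this
  have h2 : HasDerivAt Real.log (1 / t) t := by
    simpa [one_div] using Real.hasDerivAt_log ht.ne'
  exact h1.sub h2

/-- v(t) = t * L t is monotone on (0, ∞). -/
lemma v_mono : MonotoneOn (fun t => t * L t) (Set.Ioi 0) := by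
  have hd : ∀ t ∈ Set.Ioi (0:ℝ), HasDerivAt (fun t => t * L t) (L t + t * (1/(t+1) - 1/t)) t :=
    fun t ht => by simpa [Pi.mul_def] using (hasDerivAt_id' t).mul (hasDerivAt_L ht)
  apply monotoneOn_of_deriv_nonneg (convex_Ioi 0)
  · exact fun t ht => ((hd t ht).continuousAt).continuousWithinAt
  · intro t ht
    rw [interior_Ioi] at ht
    exact ((hd t ht).differentiableAt).differentiableWithinAt
  · intro t ht
    rw [interior_Ioi] at ht
    rw [(hd t ht).deriv]
    have ht0 : (0:ℝ) < t := ht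
    have h1 := L_ge_inv ht0
    have ht' : t ≠ 0 := ne_of_gt ht0
    have : t * (1/(t+1) - 1/t) = t/(t+1) - 1 := by field_simp
    rw [this]
    have h4 : t/(t+1) - 1 = -(1/(t+1)) := by
      rw [div_sub_one (by linarith : t + 1 ≠ 0)]
      ring_nf
    rw [h4]; linarith

/-- Key inequality: κ u(N) ≤ u(M), u(t) = t(t+1)L(t), M = κN+c. -/
lemma key_ineq {κ c N : ℝ} (hκ : 1 ≤ κ) (hc : κ - 1 ≤ c) (hN : 0 < N) :
    κ * (N * (N + 1) * L N) ≤ (κ*N+c) * ((κ*N+c) + 1) * L (κ*N+c) := by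
  set M := κ*N+c with hM
  have hc0 : 0 ≤ c := by linarith
  have hNM : N ≤ M := by nlinarith
  have hM0 : 0 < M := lt_of_lt_of_le hN hNM
  have h1 : κ * (N + 1) ≤ M + 1 := by nlinarith
  have h2 : N * L N ≤ M * L M := v_mono hN hM0 hNM
  have h3 : 0 ≤ N * L N := mul_nonneg hN.le (L_pos hN).le
  calc κ * (N * (N + 1) * L N) = (κ * (N + 1)) * (N * L N) := by ring
    _ ≤ (M + 1) * (M * L M) := by
        apply mul_le_mul h1 h2 h3 (by linarith)
    _ = M * (M + 1) * L M := by ring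
lemma ratio_hasDerivAt {κ c N : ℝ} (hκ : 1 ≤ κ) (hc0 : 0 ≤ c) (hN : 0 < N) :
    HasDerivAt (fun x => L (κ*x+c) / L x)
      (((1/(κ*N+c+1) - 1/(κ*N+c)) * κ * L N - L (κ*N+c) * (1/(N+1) - 1/N)) / (L N)^2) N := by
  have hM : 0 < κ*N+c := by nlinarith
  have hAff : HasDerivAt (fun x : ℝ => κ*x + c) κ N := by
    simpa using ((hasDerivAt_id N).const_mul κ).add_const c
  have hA : HasDerivAt (fun x => L (κ*x+c)) ((1/(κ*N+c+1) - 1/(κ*N+c)) * κ) N :=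
    by have := (hasDerivAt_L hM).comp N hAff; exact this
  exact hA.div (hasDerivAt_L hN) (L_pos hN).ne'

lemma ratio_mono {κ c : ℝ} (hκ : 1 ≤ κ) (hc : κ - 1 ≤ c) :
    MonotoneOn (fun N => L (κ*N+c) / L N) (Set.Ioi 0) := by
  have hc0 : 0 ≤ c := by linarith
  apply monotoneOn_of_deriv_nonneg (convex_Ioi 0)
  · exact fun N hN => ((ratio_hasDerivAt hκ hc0 hN).continuousAt).continuousWithinAt
  · intro N hN
    rw [interior_Ioi] at hN
    exact ((ratio_hasDerivAt hκ hc0 hN).differentiableAt).differentiableWithinAt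
  · intro N hN
    rw [interior_Ioi] at hN
    have hN0 : (0:ℝ) < N := hN
    rw [(ratio_hasDerivAt hκ hc0 hN0).deriv]
    set M := κ*N+c with hMdef
    have hM : 0 < M := by nlinarith
    apply div_nonneg _ (sq_nonneg _)
    have key := key_ineq hκ hc hN0
    have h : κ * L N / (M*(M+1)) ≤ L M / (N*(N+1)) := by
      rw [div_le_div_iff₀ (by positivity) (by positivity)]
      linear_combination key
    have hnum : (1/(M+1) - 1/M) * κ * L N - L M * (1/(N+1) - 1/N)
        = L M / (N*(N+1)) - κ * L N / (M*(M+1)) := by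
      field_simp
      ring
    rw [hMdef] at hnum
    rw [hnum]
    linarith

theorem amplifier_thermal_entropy_monotone_convex (κ E : ℝ) (hκ : 1 ≤ κ) (hE : 0 ≤ E) :
    MonotoneOn (fun x => g (κ * ginv x + (κ - 1) * (E + 1))) (Set.Ici 0) ∧
      ConvexOn ℝ (Set.Ici 0) (fun x => g (κ * ginv x + (κ - 1) * (E + 1))) := by
  set c : ℝ := (κ - 1) * (E + 1) with hcdef
  have hc : κ - 1 ≤ c := by nlinarith
  have hc0 : 0 ≤ c := by nlinarith
  have hκ0 : (0:ℝ) < κ := by linarith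
  -- monotonicity
  have hmono : MonotoneOn (fun x => g (κ * ginv x + c)) (Set.Ici 0) := by
    intro x hx y hy hxy
    have hNx := ginv_nonneg (hx : (0:ℝ) ≤ x)
    have hNy := ginv_nonneg (hy : (0:ℝ) ≤ y)
    have hN : ginv x ≤ ginv y := ginv_strictMono.monotoneOn hx hy hxy
    exact g_strictMono.monotoneOn (by simp; nlinarith : κ * ginv x + c ∈ Set.Ici (0:ℝ))
      (by simp; nlinarith : κ * ginv y + c ∈ Set.Ici (0:ℝ)) (by nlinarith)
  -- derivative of F on Ioi 0
  have hF : ∀ x ∈ Set.Ioi (0:ℝ), HasDerivAt (fun x => g (κ * ginv x + c))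
      (L (κ * ginv x + c) * (κ * (L (ginv x))⁻¹)) x := by
    intro x hx
    have hx0 : (0:ℝ) < x := hx
    have hN : 0 < ginv x := ginv_pos hx0
    have hginv' : HasDerivAt ginv (L (ginv x))⁻¹ x := by
      apply HasDerivAt.of_local_left_inverse (ginv_continuousAt hx0)
        (hasDerivAt_g hN) (L_pos hN).ne'
      filter_upwards [Ioi_mem_nhds hx0] with y hy
      exact g_ginv (le_of_lt hy)
    have hinner : HasDerivAt (fun y => κ * ginv y + c) (κ * (L (ginv x))⁻¹) x :=
      (hginv'.const_mul κ).add_const c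
    have hM : 0 < κ * ginv x + c := by nlinarith
    exact (hasDerivAt_g hM).comp x hinner
  -- convexity
  have hcont : ContinuousOn (fun x => g (κ * ginv x + c)) (Set.Ici 0) :=
    g_continuous.comp_continuousOn
      ((continuousOn_const.mul ginv_continuousOn).add continuousOn_const)
  have hdiff : DifferentiableOn ℝ (fun x => g (κ * ginv x + c)) (interior (Set.Ici 0)) := by
    rw [interior_Ici]
    exact fun x hx => ((hF x hx).differentiableAt).differentiableWithinAt
  have hderiv_mono : MonotoneOn (deriv (fun x => g (κ * ginv x + c))) (interior (Set.Ici 0)) := by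
    rw [interior_Ici]
    intro x hx y hy hxy
    rw [(hF x hx).deriv, (hF y hy).deriv]
    have hx0 : (0:ℝ) < x := hx
    have hy0 : (0:ℝ) < y := hy
    have hNx : 0 < ginv x := ginv_pos hx0
    have hNy : 0 < ginv y := ginv_pos hy0
    have hN : ginv x ≤ ginv y := ginv_strictMono.monotoneOn hx0.le hy0.le hxy
    have hr := ratio_mono hκ hc hNx hNy hN
    have hr2 := mul_le_mul_of_nonneg_left hr hκ0.le
    calc L (κ * ginv x + c) * (κ * (L (ginv x))⁻¹)
        = κ * (L (κ * ginv x + c) / L (ginv x)) := by rw [div_eq_mul_inv]; ring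
      _ ≤ κ * (L (κ * ginv y + c) / L (ginv y)) := hr2
      _ = L (κ * ginv y + c) * (κ * (L (ginv y))⁻¹) := by rw [div_eq_mul_inv]; ring
  exact ⟨hmono, MonotoneOn.convexOn_of_deriv (convex_Ici 0) hcont hdiff hderiv_mono⟩
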